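/- Let X be a Polish space and let ρ : F → [Ψ]^ω be a partition regular function. Identify subsets of Ω (respectively Ψ) with their characteristic functions in the product space 2^Ω (respectively 2^Ψ), so that [Ω]^ω and [Ψ]^ω are Polish spaces. If F is an analytic subset of [Ω]^ω and ρ is a Borel function, then for every sequence x : Ψ → X the set Λ_x(ρ) is an analytic subset of X. -/

import Mathlib

open Set Filter Topology

variable {Ω Ψ X : Type*}

/-- A partition regular function `ρ : F → [Ψ]^ω`, encoded as a total function
`ρ : Set Ω → Set Ψ` whose relevant values are those on members of `F`. -/
structure IsPartitionRegular (F : Set (Set Ω)) (ρ : Set Ω → Set Ψ) : Prop where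
  nonempty : F.Nonempty
  mem_infinite : ∀ A ∈ F, A.Infinite
  diff_mem : ∀ A ∈ F, ∀ K : Set Ω, K.Finite → A \ K ∈ F
  image_infinite : ∀ A ∈ F, (ρ A).Infinite
  mono : ∀ E ∈ F, ∀ G ∈ F, E ⊆ G → ρ E ⊆ ρ G
  ramsey : ∀ G ∈ F, ∀ A B : Set Ψ, ρ G = A ∪ B → ∃ E ∈ F, ρ E ⊆ A ∨ ρ E ⊆ B
  shrink : ∀ G ∈ F, ∃ E ∈ F, E ⊆ G ∧ ∀ a ∈ ρ E, ∃ K : Set Ω, K.Finite ∧ a ∉ ρ (E \ K)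

/-- `η` is a `ρ`-limit point of `x`. -/
def IsRhoLimitPoint [TopologicalSpace X] (F : Set (Set Ω)) (ρ : Set Ω → Set Ψ)
    (x : Ψ → X) (η : X) : Prop :=
  ∃ G ∈ F, ∀ U ∈ 𝓝 η, ∃ K : Set Ω, K.Finite ∧ ∀ s ∈ ρ (G \ K), x s ∈ U


/-- The characteristic function of a set, as an element of the Cantor-like
product space `α → Bool` (i.e. `2^α`). -/
noncomputable def chi {α : Type*} (A : Set α) : α → Bool :=
  fun i => @decide (i ∈ A) (Classical.dec _)

lemma chi_eq_true {α : Type*} {A : Set α} {i : α} : chi A i = true ↔ i ∈ A := by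
  simp [chi]

lemma setOf_chi {α : Type*} (A : Set α) : {i | chi A i = true} = A := by
  ext i; exact chi_eq_true

/-- removing a finite set, on characteristic functions -/
noncomputable def theta {α : Type*} (K : Finset α) (f : α → Bool) : α → Bool :=
  fun i => f i && !(@decide (i ∈ K) (Classical.dec _))

lemma theta_chi {α : Type*} (K : Finset α) (A : Set α) :
    theta K (chi A) = chi (A \ ↑K) := by
  funext i
  by_cases hA : i ∈ A <;> by_cases hK : i ∈ K <;>
    simp [theta, chi, hA, hK]

lemma setOf_theta {α : Type*} (K : Finset α) (f : α → Bool) :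
    {i | theta K f i = true} = {i | f i = true} \ ↑K := by
  ext i; by_cases hK : i ∈ K <;> simp [theta, hK]

lemma continuous_theta {α : Type*} (K : Finset α) :
    Continuous (theta (α := α) K) := by
  refine continuous_pi fun i => ?_
  exact Continuous.comp (continuous_of_discreteTopology
    (f := fun b : Bool => b && !(@decide (i ∈ K) (Classical.dec _)))) (continuous_apply i)

theorem lambda_rho_analytic
    [Countable Ω] [Infinite Ω] [Countable Ψ] [Infinite Ψ]
    [TopologicalSpace X] [PolishSpace X]
    (F : Set (Set Ω)) (ρ : Set Ω → Set Ψ) (hpr : IsPartitionRegular F ρ)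
    (hF : MeasureTheory.AnalyticSet (chi '' F))
    (hρ : Measurable ((chi '' F).restrict
      fun f : Ω → Bool => chi (ρ {i | f i = true})))
    (x : Ψ → X) :
    MeasureTheory.AnalyticSet {η | IsRhoLimitPoint F ρ x η} := by
  classical
  letI := TopologicalSpace.upgradeIsCompletelyMetrizable X
  letI : MeasurableSpace X := borel X
  haveI : BorelSpace X := ⟨rfl⟩
  haveI : PolishSpace (Ω → Bool) := instPolishSpaceOfSeparableSpaceOfIsCompletelyMetrizableSpace
  set T : Set (Ω → Bool) := chi '' F with hT
  -- theta maps T to T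
  have htheta_mem : ∀ (K : Finset Ω) (f : Ω → Bool), f ∈ T → theta K f ∈ T := by
    rintro K f ⟨A, hA, rfl⟩
    exact ⟨A \ ↑K, hpr.diff_mem A hA _ K.finite_toSet, (theta_chi K A).symm⟩
  -- the key measurable function on the subtype
  have hg : ∀ K : Finset Ω, Measurable fun f : T =>
      chi (ρ ({i | (f : Ω → Bool) i = true} \ ↑K)) := by
    intro K
    have h1 : Measurable fun f : T => (⟨theta K f, htheta_mem K f f.2⟩ : T) :=
      ((continuous_theta K).measurable.comp measurable_subtype_coe).subtype_mk
    have h2 := hρ.comp h1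
    have heq : (((chi '' F).restrict fun f : Ω → Bool => chi (ρ {i | f i = true})) ∘
        fun f : T => (⟨theta K f, htheta_mem K f f.2⟩ : T)) =
        fun f : T => chi (ρ ({i | (f : Ω → Bool) i = true} \ ↑K)) := by
      funext f
      simp only [Function.comp_apply, Set.restrict_apply, setOf_theta]
      exact congrArg (fun A => chi (ρ A)) (setOf_theta K f)
    rwa [heq] at h2
  -- extract Borel sets W K s
  have hW : ∀ (K : Finset Ω) (s : Ψ), ∃ W : Set (Ω → Bool), MeasurableSet W ∧
      ∀ f : T, ((f : Ω → Bool) ∈ W ↔ s ∈ ρ ({i | (f : Ω → Bool) i = true} \ ↑K)) := by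
    intro K s
    have hm : MeasurableSet {f : T | chi (ρ ({i | (f : Ω → Bool) i = true} \ ↑K)) s = true} :=
      ((measurable_pi_apply s).comp (hg K)) (measurableSet_singleton true)
    rw [MeasurableSpace.measurableSet_comap] at hm
    obtain ⟨W, hWm, hWeq⟩ := hm
    refine ⟨W, hWm, fun f => ?_⟩
    have : f ∈ Subtype.val ⁻¹' W ↔
        chi (ρ ({i | (f : Ω → Bool) i = true} \ ↑K)) s = true := by rw [hWeq]; rfl
    simpa [chi_eq_true] using this
  choose W hWm hWiff using hW
  -- the big analytic set in the product
  set S : Set ((Ω → Bool) × X) :=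
    (T ×ˢ univ) ∩ ⋂ n : ℕ, ⋃ K : Finset Ω, ⋂ s : Ψ,
      {p : (Ω → Bool) × X | p.1 ∈ W K s → dist (x s) p.2 ≤ 1 / (n + 1)} with hS
  have hSanalytic : MeasureTheory.AnalyticSet S := by
    have h1 : MeasureTheory.AnalyticSet ((T ×ˢ univ : Set ((Ω → Bool) × X))) := by
      rw [MeasureTheory.AnalyticSet] at hF
      rcases hF with hF | ⟨f, fcont, frange⟩
      · rw [hF, Set.empty_prod]
        exact MeasureTheory.analyticSet_empty
      · have huniv : MeasureTheory.AnalyticSet (univ : Set ((ℕ → ℕ) × X)) :=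
          MeasurableSet.univ.analyticSet
        have := huniv.image_of_continuous
          (f := Prod.map f (id : X → X)) (fcont.prodMap continuous_id)
        rwa [Set.image_univ, Set.range_prodMap, Set.range_id, frange] at this
    have h2 : MeasurableSet (⋂ n : ℕ, ⋃ K : Finset Ω, ⋂ s : Ψ,
        {p : (Ω → Bool) × X | p.1 ∈ W K s → dist (x s) p.2 ≤ 1 / (n + 1)}) := by
      refine MeasurableSet.iInter fun n => MeasurableSet.iUnion fun K =>
        MeasurableSet.iInter fun s => ?_
      have : {p : (Ω → Bool) × X | p.1 ∈ W K s → dist (x s) p.2 ≤ 1 / (n + 1)} =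
          (W K s ×ˢ (univ : Set X))ᶜ ∪ (univ : Set (Ω → Bool)) ×ˢ
            {η : X | dist (x s) η ≤ 1 / (n + 1)} := by
        ext p; by_cases h : p.1 ∈ W K s <;> simp [h]
      rw [this]
      refine MeasurableSet.union ((hWm K s).prod MeasurableSet.univ).compl
        (MeasurableSet.univ.prod ?_)
      exact (isClosed_le (continuous_const.dist continuous_id) continuous_const).measurableSet
    have h2' : MeasureTheory.AnalyticSet (⋂ n : ℕ, ⋃ K : Finset Ω, ⋂ s : Ψ,
        {p : (Ω → Bool) × X | p.1 ∈ W K s → dist (x s) p.2 ≤ 1 / (n + 1)}) :=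
      h2.analyticSet
    have hSeq : S = ⋂ b : Bool, (bif b then (⋂ n : ℕ, ⋃ K : Finset Ω, ⋂ s : Ψ,
        {p : (Ω → Bool) × X | p.1 ∈ W K s → dist (x s) p.2 ≤ 1 / (n + 1)})
        else (T ×ˢ univ)) := by
      rw [hS]
      ext p
      simp [Set.mem_iInter, Bool.forall_bool, and_comm]
    rw [hSeq]
    refine MeasureTheory.AnalyticSet.iInter fun b => ?_
    cases b
    · exact h1
    · exact h2'
  -- identify the limit point set as the projection of S
  have hkey : {η | IsRhoLimitPoint F ρ x η} = Prod.snd '' S := by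
    ext η
    simp only [Set.mem_setOf_eq, Set.mem_image]
    constructor
    · rintro ⟨G, hG, hlim⟩
      refine ⟨(chi G, η), ?_, rfl⟩
      rw [hS]
      refine ⟨⟨⟨G, hG, rfl⟩, trivial⟩, ?_⟩
      simp only [Set.mem_iInter, Set.mem_iUnion]
      intro n
      obtain ⟨K, hKfin, hK⟩ := hlim (Metric.ball η (1 / (n + 1)))
        (Metric.ball_mem_nhds η (by positivity))
      refine ⟨hKfin.toFinset, fun s => ?_⟩
      simp only [Set.mem_setOf_eq]
      intro hw
      have hmem : s ∈ ρ ({i | chi G i = true} \ ↑hKfin.toFinset) :=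
        (hWiff hKfin.toFinset s ⟨chi G, ⟨G, hG, rfl⟩⟩).1 hw
      rw [setOf_chi, hKfin.coe_toFinset] at hmem
      have := hK s hmem
      rw [Metric.mem_ball] at this
      linarith [this]
    · rintro ⟨⟨f, η'⟩, hmem, rfl⟩
      rw [hS] at hmem
      obtain ⟨⟨⟨G, hG, rfl⟩, -⟩, hall⟩ := hmem
      refine ⟨G, hG, fun U hU => ?_⟩
      obtain ⟨ε, hε, hball⟩ := Metric.mem_nhds_iff.1 hU
      obtain ⟨n, hn⟩ := exists_nat_one_div_lt hε
      simp only [Set.mem_iInter, Set.mem_iUnion] at hall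
      obtain ⟨K, hK⟩ := hall n
      refine ⟨↑K, K.finite_toSet, fun s hs => ?_⟩
      have hw : chi G ∈ W K s := by
        apply (hWiff K s ⟨chi G, ⟨G, hG, rfl⟩⟩).2
        rw [setOf_chi]; exact hs
      have hd : dist (x s) η' ≤ 1 / (n + 1) := hK s hw
      apply hball
      rw [Metric.mem_ball]
      exact lt_of_le_of_lt hd hn
  rw [hkey]
  exact hSanalytic.image_of_continuous continuous_snd
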